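/- Let G be a group and let N ≤ M be normal subgroups of G with ⁅M, M⁆ ≤ N (so that M/N is abelian). Let E ≤ F be subgroups of G with M ⊔ E = M ⊔ F. Then for every subgroup K of G with N ≤ K ≤ M, E normalizes K if and only if F normalizes K; that is, E ≤ N_G(K) if and only if F ≤ N_G(K). -/

import Mathlib

open scoped commutatorElement
/-- Let `N ≤ M` be normal subgroups of `G` with `⁅M, M⁆ ≤ N`, and let `E ≤ F`
be subgroups with `M ⊔ E = M ⊔ F`.  Then for every subgroup `K` with
`N ≤ K ≤ M`, `E` normalizes `K` iff `F` normalizes `K`. -/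
theorem normalizes_iff_of_join_eq {G : Type*} [Group G]
    (N M : Subgroup G) (hN : N.Normal) (hM : M.Normal) (hNM : N ≤ M)
    (hcomm : ⁅M, M⁆ ≤ N)
    (E F : Subgroup G) (hEF : E ≤ F) (hjoin : M ⊔ E = M ⊔ F) :
    ∀ K : Subgroup G, N ≤ K → K ≤ M →
      (E ≤ Subgroup.normalizer (K : Set G) ↔ F ≤ Subgroup.normalizer (K : Set G)) := by
  intro K hNK hKM
  have hMnorm : M ≤ Subgroup.normalizer (K : Set G) := by
    intro m hm
    rw [Subgroup.mem_normalizer_iff]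
    intro k
    constructor
    · intro hk
      have hc : m * k * m⁻¹ * k⁻¹ ∈ K :=
        hNK (hcomm (Subgroup.commutator_mem_commutator hm (hKM hk)))
      have : (m * k * m⁻¹ * k⁻¹) * k ∈ K := K.mul_mem hc hk
      simpa using this
    · intro hk
      have hc : ⁅m⁻¹, m * k * m⁻¹⁆ ∈ K :=
        hNK (hcomm (Subgroup.commutator_mem_commutator (M.inv_mem hm)
          (hKM hk)))
      have h2 : ⁅m⁻¹, m * k * m⁻¹⁆ * (m * k * m⁻¹) ∈ K := K.mul_mem hc hk
      simpa [commutatorElement_def, mul_assoc] using h2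
  constructor
  · intro hE
    have : M ⊔ F ≤ Subgroup.normalizer (K : Set G) := by
      rw [← hjoin]; exact sup_le hMnorm hE
    exact le_trans le_sup_right this
  · intro hF
    exact le_trans hEF hF
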